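/- For a polynomial p on ℝ^(m×n), tr Δ_A applied to the function U ↦ p(UN) equals (tr(N Δ_A Nᵀ) p)(UN); in particular, for a homogeneous polynomial P with P(UM) = (det M)^α P(U) and a symmetric positive definite Y ∈ ℝ^(n×n), one has (det Y)^{−α/2} · (exp(−tr Δ_A/(8π)) P)(U Y^{1/2}) = (exp(−tr(Δ_A Y^{−1})/(8π)) P)(U). -/

import Mathlib

open scoped BigOperators
open Matrix MvPolynomial

/-- The trace Laplacian `tr Δ_A` acting on polynomials on `ℝ^(m×n)`. -/
noncomputable def trLapPoly {m n : ℕ} (A : Matrix (Fin m) (Fin m) ℝ)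
    (p : MvPolynomial (Fin m × Fin n) ℝ) : MvPolynomial (Fin m × Fin n) ℝ :=
  ∑ c : Fin n, ∑ a : Fin m, ∑ b : Fin m,
    MvPolynomial.C (A⁻¹ a b) * pderiv (a, c) (pderiv (b, c) p)

/-- `exp(c · tr Δ_A)` applied to a polynomial (a finite sum). -/
noncomputable def expTrLap {m n : ℕ} (A : Matrix (Fin m) (Fin m) ℝ) (c : ℝ)
    (p : MvPolynomial (Fin m × Fin n) ℝ) : MvPolynomial (Fin m × Fin n) ℝ :=
  ∑ k ∈ Finset.range (p.totalDegree + 1),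
    (c ^ k / k.factorial : ℝ) • (trLapPoly A)^[k] p

/-- Polynomial substitution `U ↦ UN`. -/
noncomputable def subN {m n : ℕ} (N : Matrix (Fin n) (Fin n) ℝ)
    (p : MvPolynomial (Fin m × Fin n) ℝ) : MvPolynomial (Fin m × Fin n) ℝ :=
  MvPolynomial.aeval
    (fun q : Fin m × Fin n => ∑ c, MvPolynomial.C (N c q.2) * X (q.1, c)) p

/-- The operator `tr(N Δ_A Nᵀ)` acting on polynomials. -/
noncomputable def trNLapN {m n : ℕ} (A : Matrix (Fin m) (Fin m) ℝ)
    (N : Matrix (Fin n) (Fin n) ℝ)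
    (p : MvPolynomial (Fin m × Fin n) ℝ) : MvPolynomial (Fin m × Fin n) ℝ :=
  ∑ ν : Fin n, ∑ d : Fin n, ∑ e : Fin n, ∑ μ : Fin m, ∑ ρ : Fin m,
    MvPolynomial.C (N ν d * N ν e * A⁻¹ μ ρ) * pderiv (ρ, d) (pderiv (μ, e) p)

/-- The operator `tr(Δ_A Y⁻¹)` acting on polynomials. -/
noncomputable def trLapYinv {m n : ℕ} (A : Matrix (Fin m) (Fin m) ℝ)
    (Y : Matrix (Fin n) (Fin n) ℝ)
    (p : MvPolynomial (Fin m × Fin n) ℝ) : MvPolynomial (Fin m × Fin n) ℝ :=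
  ∑ ν : Fin n, ∑ ν' : Fin n, ∑ a : Fin m, ∑ b : Fin m,
    MvPolynomial.C (Y⁻¹ ν' ν * A⁻¹ a b) * pderiv (a, ν) (pderiv (b, ν') p)

/-- `exp(c · tr(Δ_A Y⁻¹))` applied to a polynomial (a finite sum). -/
noncomputable def expTrLapYinv {m n : ℕ} (A : Matrix (Fin m) (Fin m) ℝ)
    (Y : Matrix (Fin n) (Fin n) ℝ) (c : ℝ)
    (p : MvPolynomial (Fin m × Fin n) ℝ) : MvPolynomial (Fin m × Fin n) ℝ :=
  ∑ k ∈ Finset.range (p.totalDegree + 1),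
    (c ^ k / k.factorial : ℝ) • (trLapYinv A Y)^[k] p

/-! ### Auxiliary lemmas -/

lemma pderiv_aeval_fintype {σ : Type*} [Fintype σ] [DecidableEq σ]
    (f : σ → MvPolynomial σ ℝ) (i : σ) (p : MvPolynomial σ ℝ) :
    pderiv i (aeval f p) = ∑ j, aeval f (pderiv j p) * pderiv i (f j) := by
  induction p using MvPolynomial.induction_on with
  | C a => simp
  | add p q hp hq =>
    simp only [map_add, add_mul, Finset.sum_add_distrib, hp, hq]
  | mul_X p q h =>
    rw [map_mul (aeval f), aeval_X, pderiv_mul, h, Finset.sum_mul]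
    have : ∀ j : σ, aeval f (pderiv j (p * X q)) * pderiv i (f j) =
        aeval f (pderiv j p) * pderiv i (f j) * f q +
          (if j = q then aeval f p * pderiv i (f j) else 0) := by
      intro j
      rw [pderiv_mul, map_add, map_mul (aeval f), map_mul (aeval f), aeval_X, pderiv_X,
        Pi.single_apply]
      rcases eq_or_ne j q with hjq | hjq
      · subst hjq
        simp only [if_pos trivial, _root_.map_one]
        ring
      · rw [if_neg (Ne.symm hjq), if_neg hjq, map_zero]
        ring
    rw [Finset.sum_congr rfl fun j _ => this j, Finset.sum_add_distrib,
      Finset.sum_ite_eq' Finset.univ q (fun j => aeval f p * pderiv i (f j))]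
    simp

lemma pderiv_subN {m n : ℕ} (N : Matrix (Fin n) (Fin n) ℝ) (a : Fin m) (c : Fin n)
    (p : MvPolynomial (Fin m × Fin n) ℝ) :
    pderiv (a, c) (subN N p) = ∑ e, C (N c e) * subN N (pderiv (a, e) p) := by
  rw [subN, pderiv_aeval_fintype, Fintype.sum_prod_type]
  have key : ∀ (j1 : Fin m) (j2 : Fin n),
      pderiv (a, c) (∑ c', (C (N c' j2) * X (j1, c') : MvPolynomial (Fin m × Fin n) ℝ)) =
        if j1 = a then C (N c j2) else 0 := by
    intro j1 j2
    rw [map_sum]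
    have : ∀ c' : Fin n, pderiv (a, c) (C (N c' j2) * X (j1, c') : MvPolynomial (Fin m × Fin n) ℝ)
        = if (j1, c') = (a, c) then C (N c' j2) else 0 := by
      intro c'
      rw [pderiv_C_mul, pderiv_X, Pi.single_apply]
      split_ifs <;> simp
    rw [Finset.sum_congr rfl fun c' _ => this c']
    rcases eq_or_ne j1 a with h | h
    · subst h
      simp only [Prod.mk.injEq, true_and, if_pos rfl]
      rw [Finset.sum_ite_eq' Finset.univ c (fun c' => (C (N c' j2) : MvPolynomial (Fin m × Fin n) ℝ))]
      simp
    · simp [h]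
  calc (∑ j1, ∑ j2, aeval (fun q : Fin m × Fin n => ∑ c', C (N c' q.2) * X (q.1, c')) (pderiv (j1, j2) p) *
          pderiv (a, c) (∑ c', (C (N c' j2) * X (j1, c') : MvPolynomial (Fin m × Fin n) ℝ)))
      = ∑ j1, ∑ j2, (if j1 = a then aeval (fun q : Fin m × Fin n => ∑ c', C (N c' q.2) * X (q.1, c')) (pderiv (j1, j2) p) * C (N c j2) else 0) := by
        refine Finset.sum_congr rfl fun j1 _ => Finset.sum_congr rfl fun j2 _ => ?_
        rw [key j1 j2]
        split_ifs <;> simp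
    _ = ∑ j1, (if j1 = a then ∑ j2, aeval (fun q : Fin m × Fin n => ∑ c', C (N c' q.2) * X (q.1, c')) (pderiv (j1, j2) p) * C (N c j2) else 0) := by
        refine Finset.sum_congr rfl fun j1 _ => ?_
        split_ifs <;> simp
    _ = ∑ e, C (N c e) * subN N (pderiv (a, e) p) := by
        rw [Finset.sum_ite_eq' Finset.univ a
          (fun j1 => ∑ j2, aeval (fun q : Fin m × Fin n => ∑ c', C (N c' q.2) * X (q.1, c')) (pderiv (j1, j2) p) * C (N c j2)), if_pos (Finset.mem_univ a)]
        exact Finset.sum_congr rfl fun j2 _ => by rw [subN, mul_comm]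

lemma sum_comm_4' {M : Type*} [AddCommMonoid M] {m n : ℕ}
    (F : Fin m → Fin m → Fin n → Fin n → M) :
    ∑ a, ∑ b, ∑ e, ∑ d, F a b e d = ∑ d, ∑ e, ∑ a, ∑ b, F a b e d :=
  calc ∑ a, ∑ b, ∑ e, ∑ d, F a b e d
      = ∑ a, ∑ e, ∑ b, ∑ d, F a b e d :=
        Finset.sum_congr rfl fun _ _ => Finset.sum_comm
    _ = ∑ e, ∑ a, ∑ b, ∑ d, F a b e d := Finset.sum_comm
    _ = ∑ e, ∑ a, ∑ d, ∑ b, F a b e d :=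
        Finset.sum_congr rfl fun _ _ => Finset.sum_congr rfl fun _ _ => Finset.sum_comm
    _ = ∑ e, ∑ d, ∑ a, ∑ b, F a b e d :=
        Finset.sum_congr rfl fun _ _ => Finset.sum_comm
    _ = ∑ d, ∑ e, ∑ a, ∑ b, F a b e d := Finset.sum_comm

lemma sum_comm_5' {M : Type*} [AddCommMonoid M] {m n : ℕ}
    (F : Fin n → Fin n → Fin n → Fin m → Fin m → M) :
    ∑ ν, ∑ d, ∑ e, ∑ μ, ∑ ρ, F ν d e μ ρ = ∑ d, ∑ e, ∑ μ, ∑ ρ, ∑ ν, F ν d e μ ρ := by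
  rw [Finset.sum_comm]
  refine Finset.sum_congr rfl fun d _ => ?_
  rw [Finset.sum_comm]
  refine Finset.sum_congr rfl fun e _ => ?_
  rw [Finset.sum_comm]
  refine Finset.sum_congr rfl fun μ _ => ?_
  rw [Finset.sum_comm]

lemma subN_C_mul {m n : ℕ} (N : Matrix (Fin n) (Fin n) ℝ) (r : ℝ)
    (q : MvPolynomial (Fin m × Fin n) ℝ) :
    subN N (C r * q) = C r * subN N q := by
  simp only [subN, _root_.map_mul, aeval_C, MvPolynomial.algebraMap_eq]

lemma trLap_subN {m n : ℕ} (A : Matrix (Fin m) (Fin m) ℝ) (hAs : Aᵀ = A)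
    (N : Matrix (Fin n) (Fin n) ℝ) (p : MvPolynomial (Fin m × Fin n) ℝ) :
    trLapPoly A (subN N p) = subN N (trNLapN A N p) := by
  have hAinv : ∀ a b, A⁻¹ a b = A⁻¹ b a := by
    intro a b
    have h : A⁻¹ᵀ = A⁻¹ := by rw [Matrix.transpose_nonsing_inv, hAs]
    conv_lhs => rw [← h]
    exact Matrix.transpose_apply _ _ _
  have L1 : trLapPoly A (subN N p) =
      ∑ c, ∑ a, ∑ b, ∑ e, ∑ d,
        C (A⁻¹ a b * N c d * N c e) * subN N (pderiv (a, d) (pderiv (b, e) p)) := by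
    rw [trLapPoly]
    refine Finset.sum_congr rfl fun c _ => Finset.sum_congr rfl fun a _ =>
      Finset.sum_congr rfl fun b _ => ?_
    rw [pderiv_subN, map_sum, Finset.mul_sum]
    refine Finset.sum_congr rfl fun e _ => ?_
    rw [pderiv_C_mul, pderiv_subN, Finset.mul_sum, Finset.mul_sum]
    refine Finset.sum_congr rfl fun d _ => ?_
    rw [C_mul, C_mul]
    ring
  have R1 : subN N (trNLapN A N p) =
      ∑ c, ∑ d, ∑ e, ∑ b, ∑ a,
        C (N c d * N c e * A⁻¹ b a) * subN N (pderiv (a, d) (pderiv (b, e) p)) := by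
    rw [trNLapN, subN, map_sum]
    refine Finset.sum_congr rfl fun c _ => ?_
    rw [map_sum]
    refine Finset.sum_congr rfl fun d _ => ?_
    rw [map_sum]
    refine Finset.sum_congr rfl fun e _ => ?_
    rw [map_sum]
    refine Finset.sum_congr rfl fun b _ => ?_
    rw [map_sum]
    refine Finset.sum_congr rfl fun a _ => ?_
    rw [_root_.map_mul, aeval_C, MvPolynomial.algebraMap_eq]
    rfl
  rw [L1, R1]
  refine Finset.sum_congr rfl fun c _ => ?_
  rw [sum_comm_4' (fun a b e d => C (A⁻¹ a b * N c d * N c e) *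
      subN N (pderiv (a, d) (pderiv (b, e) p)))]
  refine Finset.sum_congr rfl fun d _ => Finset.sum_congr rfl fun e _ => ?_
  rw [Finset.sum_comm]
  refine Finset.sum_congr rfl fun a _ => Finset.sum_congr rfl fun b _ => ?_
  rw [hAinv b a]
  ring_nf

lemma trLap_subN_iter {m n : ℕ} (A : Matrix (Fin m) (Fin m) ℝ) (hAs : Aᵀ = A)
    (N : Matrix (Fin n) (Fin n) ℝ) (p : MvPolynomial (Fin m × Fin n) ℝ) (k : ℕ) :
    (trLapPoly A)^[k] (subN N p) = subN N ((trNLapN A N)^[k] p) := by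
  induction k generalizing p with
  | zero => rfl
  | succ k ih =>
    rw [Function.iterate_succ_apply, Function.iterate_succ_apply, trLap_subN A hAs, ih]

lemma trLapPoly_C_mul {m n : ℕ} (A : Matrix (Fin m) (Fin m) ℝ) (r : ℝ)
    (p : MvPolynomial (Fin m × Fin n) ℝ) :
    trLapPoly A (C r * p) = C r * trLapPoly A p := by
  rw [trLapPoly, trLapPoly, Finset.mul_sum]
  refine Finset.sum_congr rfl fun c _ => ?_
  rw [Finset.mul_sum]
  refine Finset.sum_congr rfl fun a _ => ?_
  rw [Finset.mul_sum]
  refine Finset.sum_congr rfl fun b _ => ?_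
  rw [pderiv_C_mul, pderiv_C_mul]
  ring

lemma trLapPoly_C_mul_iter {m n : ℕ} (A : Matrix (Fin m) (Fin m) ℝ) (r : ℝ)
    (p : MvPolynomial (Fin m × Fin n) ℝ) (k : ℕ) :
    (trLapPoly A)^[k] (C r * p) = C r * (trLapPoly A)^[k] p := by
  induction k generalizing p with
  | zero => rfl
  | succ k ih =>
    rw [Function.iterate_succ_apply, Function.iterate_succ_apply, trLapPoly_C_mul, ih]

lemma eval_subN {m n : ℕ} (N : Matrix (Fin n) (Fin n) ℝ)
    (x : Fin m × Fin n → ℝ) (q : MvPolynomial (Fin m × Fin n) ℝ) :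
    eval x (subN N q) = eval (fun i : Fin m × Fin n => ∑ c, N c i.2 * x (i.1, c)) q := by
  rw [subN]
  induction q using MvPolynomial.induction_on with
  | C a => simp
  | add p q hp hq => rw [map_add, map_add, map_add, hp, hq]
  | mul_X p j h =>
    rw [map_mul (aeval _), map_mul (eval x), h, map_mul (eval _), aeval_X, eval_X,
      map_sum]
    congr 1
    exact Finset.sum_congr rfl fun c _ => by simp

lemma trNLapN_eq_trLapYinv {m n : ℕ} (A : Matrix (Fin m) (Fin m) ℝ) (hAs : Aᵀ = A)
    (W Y : Matrix (Fin n) (Fin n) ℝ)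
    (hW : ∀ d e, (∑ ν, W ν d * W ν e) = Y⁻¹ e d) :
    trNLapN A W = trLapYinv A Y := by
  have hAinv : ∀ a b, A⁻¹ a b = A⁻¹ b a := by
    intro a b
    have h : A⁻¹ᵀ = A⁻¹ := by rw [Matrix.transpose_nonsing_inv, hAs]
    conv_lhs => rw [← h]
    exact Matrix.transpose_apply _ _ _
  funext p
  rw [trNLapN, trLapYinv,
    sum_comm_5' (fun ν d e μ ρ => C (W ν d * W ν e * A⁻¹ μ ρ) * pderiv (ρ, d) (pderiv (μ, e) p))]
  refine Finset.sum_congr rfl fun d _ => Finset.sum_congr rfl fun e _ => ?_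
  rw [Finset.sum_comm]
  refine Finset.sum_congr rfl fun a _ => Finset.sum_congr rfl fun b _ => ?_
  rw [← Finset.sum_mul, ← map_sum C (fun ν => W ν d * W ν e * A⁻¹ b a)]
  have : (∑ ν, W ν d * W ν e * A⁻¹ b a) = Y⁻¹ e d * A⁻¹ a b := by
    rw [← Finset.sum_mul, hW, hAinv b a]
  rw [this]

/-! ### Main theorem -/

/-- `tr Δ_A (p(UN)) = (tr(N Δ_A Nᵀ) p)(UN)` for polynomials `p`;
and for a homogeneous polynomial `P` of determinant-degree `α` and a symmetric
positive definite `Y`, `(det Y)^{−α/2} (exp(−tr Δ_A/(8π)) P)(U Y^{1/2}) =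
(exp(−tr(Δ_A Y⁻¹)/(8π)) P)(U)`. -/
theorem stmt12 {m n : ℕ} (A : Matrix (Fin m) (Fin m) ℝ) (hAs : Aᵀ = A)
    (hA : IsUnit A.det) (p : MvPolynomial (Fin m × Fin n) ℝ)
    (N : Matrix (Fin n) (Fin n) ℝ) (α : ℕ) (P : MvPolynomial (Fin m × Fin n) ℝ)
    (hhom : ∀ (U : Fin m → Fin n → ℝ) (M : Matrix (Fin n) (Fin n) ℝ),
      MvPolynomial.eval (fun q => ∑ c, U q.1 c * M c q.2) P =
        M.det ^ α * MvPolynomial.eval (fun q => U q.1 q.2) P)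
    (Y : Matrix (Fin n) (Fin n) ℝ) (hY : Y.PosDef) :
    trLapPoly A (subN N p) = subN N (trNLapN A N p) ∧
    ∀ U : Fin m → Fin n → ℝ,
      Y.det ^ (-(α : ℝ) / 2) *
          MvPolynomial.eval
            (fun q => ∑ c, U q.1 c * (hY.1.eigenvectorUnitary.1 *
              diagonal (fun i => √(hY.1.eigenvalues i)) *
              (star hY.1.eigenvectorUnitary : Matrix (Fin n) (Fin n) ℝ)) c q.2)
            (expTrLap A (-(8 * Real.pi)⁻¹) P) =
        MvPolynomial.eval (fun q => U q.1 q.2)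
          (expTrLapYinv A Y (-(8 * Real.pi)⁻¹) P) := by
  refine ⟨trLap_subN A hAs N p, ?_⟩
  intro U
  set S : Matrix (Fin n) (Fin n) ℝ := hY.1.eigenvectorUnitary.1 *
              diagonal (fun i => √(hY.1.eigenvalues i)) *
              (star hY.1.eigenvectorUnitary : Matrix (Fin n) (Fin n) ℝ) with hSdef
  have hP : S.PosSemidef :=
    (posSemidef_diagonal_iff.mpr fun i => Real.sqrt_nonneg _).mul_mul_conjTranspose_same
      hY.1.eigenvectorUnitary.1
  have hSS : S * S = Y := by
    have hUU : (star hY.1.eigenvectorUnitary : Matrix (Fin n) (Fin n) ℝ) *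
        hY.1.eigenvectorUnitary.1 = 1 := hY.1.eigenvectorUnitary.2.1
    have e1 : S * S = hY.1.eigenvectorUnitary.1 *
        (diagonal (fun i => √(hY.1.eigenvalues i)) *
          ((star hY.1.eigenvectorUnitary : Matrix (Fin n) (Fin n) ℝ) *
            hY.1.eigenvectorUnitary.1) * diagonal (fun i => √(hY.1.eigenvalues i))) *
        (star hY.1.eigenvectorUnitary : Matrix (Fin n) (Fin n) ℝ) := by
      simp only [hSdef, Matrix.mul_assoc]
    rw [e1, hUU, Matrix.mul_one, diagonal_mul_diagonal]
    conv_rhs => rw [hY.1.spectral_theorem, Unitary.conjStarAlgAut_apply]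
    congr 2
    congr 1
    funext i
    simp [Real.mul_self_sqrt (hY.posSemidef.eigenvalues_nonneg i)]
  have hSsym : Sᵀ = S := by
    have := hP.isHermitian
    rwa [Matrix.IsHermitian, Matrix.conjTranspose_eq_transpose_of_trivial] at this
  have hYsym : Yᵀ = Y := by
    have := hY.isHermitian
    rwa [Matrix.IsHermitian, Matrix.conjTranspose_eq_transpose_of_trivial] at this
  have hs0 : 0 ≤ S.det := by
    rw [hP.isHermitian.det_eq_prod_eigenvalues]
    exact Finset.prod_nonneg fun i _ => hP.eigenvalues_nonneg i
  have hs2 : S.det * S.det = Y.det := by rw [← Matrix.det_mul, hSS]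
  have hYdet : 0 < Y.det := hY.det_pos
  have hspos : 0 < S.det := by
    rcases hs0.lt_or_eq with h | h
    · exact h
    · exfalso; rw [← h] at hs2; simp at hs2; rw [← hs2] at hYdet; simp at hYdet
  have hSunit : IsUnit S.det := hspos.ne'.isUnit
  set W : Matrix (Fin n) (Fin n) ℝ := S⁻¹ with hWdef
  have hSW : S * W = 1 := Matrix.mul_nonsing_inv S hSunit
  have hWsym : Wᵀ = W := by rw [hWdef, Matrix.transpose_nonsing_inv, hSsym]
  have hWW : W * W = Y⁻¹ := by rw [← hSS, Matrix.mul_inv_rev]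
  have hWentry : ∀ d e, (∑ ν, W ν d * W ν e) = Y⁻¹ e d := by
    intro d e
    have h1 : ∀ ν, W ν d = W d ν := by
      intro ν
      conv_lhs => rw [← hWsym]
      exact Matrix.transpose_apply _ _ _
    calc (∑ ν, W ν d * W ν e) = ∑ ν, W d ν * W ν e :=
          Finset.sum_congr rfl fun ν _ => by rw [h1]
      _ = (W * W) d e := (Matrix.mul_apply).symm
      _ = Y⁻¹ d e := by rw [hWW]
      _ = Y⁻¹ e d := by
          have h2 : (Y⁻¹)ᵀ = Y⁻¹ := by rw [Matrix.transpose_nonsing_inv, hYsym]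
          conv_lhs => rw [← h2]
          exact Matrix.transpose_apply _ _ _
  have hWdet : W.det = S.det⁻¹ := by rw [hWdef, Matrix.det_nonsing_inv, Ring.inverse_eq_inv]
  set dc : ℝ := W.det ^ α with hdc
  have hdcne : dc ≠ 0 := by
    rw [hdc, hWdet]
    positivity
  -- homogeneity as polynomial identity
  have hsubWP : subN W P = C dc * P := by
    apply MvPolynomial.funext
    intro x
    rw [eval_subN, map_mul (eval x), eval_C]
    have hpt : (fun i : Fin m × Fin n => ∑ c, W c i.2 * x (i.1, c)) =
        fun q : Fin m × Fin n => ∑ c, (fun i1 c' => x (i1, c')) q.1 c * W c q.2 := by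
      funext i
      exact Finset.sum_congr rfl fun c _ => mul_comm _ _
    rw [hpt, hhom (fun i1 c' => x (i1, c')) W]
  -- key identity
  have hfun : trNLapN A W = trLapYinv A Y := trNLapN_eq_trLapYinv A hAs W Y hWentry
  have key : ∀ k, C dc * (trLapPoly A)^[k] P = subN W ((trLapYinv A Y)^[k] P) := by
    intro k
    rw [← hfun, ← trLap_subN_iter A hAs, hsubWP, trLapPoly_C_mul_iter]
  -- the evaluation point composed with W gives back U
  set x : Fin m × Fin n → ℝ := fun q => ∑ c, U q.1 c * S c q.2 with hx
  have hcomp : (fun i : Fin m × Fin n => ∑ c, W c i.2 * x (i.1, c)) =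
      fun q : Fin m × Fin n => U q.1 q.2 := by
    funext i
    rw [hx]
    calc (∑ c, W c i.2 * ∑ c', U i.1 c' * S c' c)
        = ∑ c, ∑ c', U i.1 c' * (S c' c * W c i.2) := by
          refine Finset.sum_congr rfl fun c _ => ?_
          rw [Finset.mul_sum]
          exact Finset.sum_congr rfl fun c' _ => by ring
      _ = ∑ c', ∑ c, U i.1 c' * (S c' c * W c i.2) := Finset.sum_comm
      _ = ∑ c', U i.1 c' * (S * W) c' i.2 := by
          refine Finset.sum_congr rfl fun c' _ => ?_
          rw [Matrix.mul_apply, Finset.mul_sum]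
      _ = ∑ c', U i.1 c' * (1 : Matrix (Fin n) (Fin n) ℝ) c' i.2 := by rw [hSW]
      _ = U i.1 i.2 := by
          rw [Finset.sum_congr rfl fun c' (_ : c' ∈ Finset.univ) => by
            rw [Matrix.one_apply]]
          simp [Finset.mul_sum]
  have heval : ∀ k, dc * eval x ((trLapPoly A)^[k] P) =
      eval (fun q : Fin m × Fin n => U q.1 q.2) ((trLapYinv A Y)^[k] P) := by
    intro k
    have := congrArg (eval x) (key k)
    rw [map_mul (eval x), eval_C, eval_subN, hcomp] at this
    exact this
  -- the determinant prefactor equals dc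
  have hdet : Y.det ^ (-(α : ℝ) / 2) = dc := by
    rw [← hs2, hdc, hWdet, inv_pow]
    have h2 : (S.det * S.det : ℝ) = S.det ^ ((2 : ℕ) : ℝ) := by
      rw [Real.rpow_natCast]
      ring
    rw [h2, ← Real.rpow_mul hs0]
    have h3 : ((2 : ℕ) : ℝ) * (-(α : ℝ) / 2) = -(α : ℝ) := by push_cast; ring
    rw [h3, Real.rpow_neg hs0, Real.rpow_natCast]
  -- put everything together
  rw [hdet, expTrLap, expTrLapYinv, map_sum (eval x), map_sum (eval _), Finset.mul_sum]
  refine Finset.sum_congr rfl fun k _ => ?_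
  rw [smul_eval, smul_eval, ← heval k]
  ring
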